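/- Let A, B, C be an affinely independent triple in the Euclidean plane with incenter I = (a·A + b·B + c·C)/(2s) (where a = dist B C, b = dist C A, c = dist A B, s = (a+b+c)/2) and orthocenter H. Let H_A, H_B, H_C be the orthocenters of triangles BIC, CIA, AIB. Let O_a, O_b, O_c be the circumcenters of triangles H_A B C, H_B C A, H_C A B, and let O_A, O_B, O_C be the circumcenters of triangles A H_B H_C, B H_C H_A, C H_A H_B (all six triples assumed affinely independent). Then the anti-Fuhrmann triangle O_A O_B O_C is the reflection of the Fuhrmann triangle O_a O_b O_c in the midpoint of H and I: O_A = H + I − O_a, O_B = H + I − O_b, and O_C = H + I − O_c. -/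
import Mathlib

open EuclideanGeometry
open scoped InnerProductSpace RealInnerProductSpace

/-- The orthocenter of the triangle with vertices `A`, `B`, `C`. -/
noncomputable def orthocenter3 (A B C : EuclideanSpace ℝ (Fin 2))
    (h : AffineIndependent ℝ ![A, B, C]) : EuclideanSpace ℝ (Fin 2) :=
  Affine.Triangle.orthocenter ⟨![A, B, C], h⟩

/-- The circumcenter of the triangle with vertices `A`, `B`, `C`. -/
noncomputable def circumcenter3 (A B C : EuclideanSpace ℝ (Fin 2))
    (h : AffineIndependent ℝ ![A, B, C]) : EuclideanSpace ℝ (Fin 2) :=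
  Affine.Simplex.circumcenter ⟨![A, B, C], h⟩

/-- The circumradius of the triangle with vertices `A`, `B`, `C`. -/
noncomputable def circumradius3 (A B C : EuclideanSpace ℝ (Fin 2))
    (h : AffineIndependent ℝ ![A, B, C]) : ℝ :=
  Affine.Simplex.circumradius ⟨![A, B, C], h⟩

private lemma span_top3 {P Q R : EuclideanSpace ℝ (Fin 2)} (h : AffineIndependent ℝ ![P,Q,R]) :
    affineSpan ℝ (Set.range ![P,Q,R]) = ⊤ := by
  rw [h.affineSpan_eq_top_iff_card_eq_finrank_add_one]
  simp [finrank_euclideanSpace]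

private lemma circum_unique {P Q R X : EuclideanSpace ℝ (Fin 2)}
    (h : AffineIndependent ℝ ![P,Q,R])
    (h1 : dist P X = dist Q X) (h2 : dist P X = dist R X) :
    X = circumcenter3 P Q R h := by
  apply Affine.Simplex.eq_circumcenter_of_dist_eq (s := ⟨![P,Q,R], h⟩) (r := dist P X)
  · have : (⟨![P,Q,R],h⟩ : Affine.Simplex ℝ (EuclideanSpace ℝ (Fin 2)) 2).points = ![P,Q,R] := rfl
    rw [this, span_top3 h]; trivial
  · intro i
    fin_cases i <;> simp_all

private lemma euler3 {P Q R : EuclideanSpace ℝ (Fin 2)} (h : AffineIndependent ℝ ![P,Q,R]) :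
    orthocenter3 P Q R h = P + Q + R - (2:ℝ) • circumcenter3 P Q R h := by
  unfold orthocenter3 circumcenter3
  rw [Affine.Triangle.orthocenter_eq_mongePoint,
    Affine.Simplex.mongePoint_eq_smul_vsub_vadd_circumcenter]
  have hc : (Finset.univ : Finset (Fin 3)).centroid ℝ ![P,Q,R] = (3:ℝ)⁻¹ • (P + Q + R) := by
    rw [Finset.centroid_def,
      Finset.affineCombination_eq_linear_combination _ _ _ (by
        simp [Finset.centroidWeights])]
    simp only [Finset.centroidWeights, Function.const_apply, Fin.sum_univ_three,
      Finset.card_univ, Fintype.card_fin, Matrix.cons_val_zero, Matrix.cons_val_one,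
      Matrix.head_cons, Matrix.cons_val_two, Matrix.tail_cons]
    match_scalars <;> norm_num
  have : (⟨![P,Q,R],h⟩ : Affine.Simplex ℝ (EuclideanSpace ℝ (Fin 2)) 2).points = ![P,Q,R] := rfl
  rw [this, hc]
  simp only [vsub_eq_sub, vadd_eq_add]
  match_scalars <;> norm_num

private lemma dist_aux {u v : EuclideanSpace ℝ (Fin 2)} {x y X Y : ℝ}
    (h : x^2*⟪u,u⟫ + 2*(x*y)*⟪u,v⟫ + y^2*⟪v,v⟫
       = X^2*⟪u,u⟫ + 2*(X*Y)*⟪u,v⟫ + Y^2*⟪v,v⟫) :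
    ‖x•u+y•v‖ = ‖X•u+Y•v‖ := by
  have e : ∀ (p q : ℝ), ‖p•u+q•v‖^2 = p^2*⟪u,u⟫ + 2*(p*q)*⟪u,v⟫ + q^2*⟪v,v⟫ := by
    intro p q
    rw [← real_inner_self_eq_norm_sq]
    simp only [inner_add_left, inner_add_right, real_inner_smul_left, real_inner_smul_right,
      real_inner_comm v u]
    ring
  have h2 : ‖x•u+y•v‖^2 = ‖X•u+Y•v‖^2 := by rw [e, e]; exact h
  calc ‖x•u+y•v‖ = Real.sqrt (‖x•u+y•v‖^2) := (Real.sqrt_sq (norm_nonneg _)).symm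
    _ = Real.sqrt (‖X•u+Y•v‖^2) := by rw [h2]
    _ = ‖X•u+Y•v‖ := Real.sqrt_sq (norm_nonneg _)

private lemma norm2_expand {u v : EuclideanSpace ℝ (Fin 2)} (p q : ℝ) :
    ‖p•u+q•v‖^2 = p^2*⟪u,u⟫ + 2*(p*q)*⟪u,v⟫ + q^2*⟪v,v⟫ := by
  rw [← real_inner_self_eq_norm_sq]
  simp only [inner_add_left, inner_add_right, real_inner_smul_left, real_inner_smul_right,
    real_inner_comm v u]
  ring

private lemma dist_eq_of_rep2 {A u v P Q X : EuclideanSpace ℝ (Fin 2)}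
    {dP dQ dX p1 p2 q1 q2 x1 x2 : ℝ}
    (hdP : 0 < dP) (hdQ : 0 < dQ) (hdX : 0 < dX)
    (hP : P = A + (p1/dP)•u + (p2/dP)•v) (hQ : Q = A + (q1/dQ)•u + (q2/dQ)•v)
    (hX : X = A + (x1/dX)•u + (x2/dX)•v)
    (h : dQ^2*((dX*p1-dP*x1)^2*⟪u,u⟫ + 2*((dX*p1-dP*x1)*(dX*p2-dP*x2))*⟪u,v⟫
            + (dX*p2-dP*x2)^2*⟪v,v⟫)
       = dP^2*((dX*q1-dQ*x1)^2*⟪u,u⟫ + 2*((dX*q1-dQ*x1)*(dX*q2-dQ*x2))*⟪u,v⟫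
            + (dX*q2-dQ*x2)^2*⟪v,v⟫)) :
    dist P X = dist Q X := by
  have e1 : (dP*dX) • (P - X) = (dX*p1-dP*x1)•u + (dX*p2-dP*x2)•v := by
    rw [hP, hX]; match_scalars <;> field_simp [hdP.ne', hdX.ne'] <;> ring
  have e2 : (dQ*dX) • (Q - X) = (dX*q1-dQ*x1)•u + (dX*q2-dQ*x2)•v := by
    rw [hQ, hX]; match_scalars <;> field_simp [hdQ.ne', hdX.ne'] <;> ring
  have n1 : ‖(dX*p1-dP*x1)•u + (dX*p2-dP*x2)•v‖ = (dP*dX) * ‖P - X‖ := by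
    rw [← e1, norm_smul, Real.norm_of_nonneg (mul_pos hdP hdX).le]
  have n2 : ‖(dX*q1-dQ*x1)•u + (dX*q2-dQ*x2)•v‖ = (dQ*dX) * ‖Q - X‖ := by
    rw [← e2, norm_smul, Real.norm_of_nonneg (mul_pos hdQ hdX).le]
  have hsq : dQ^2*‖(dX*p1-dP*x1)•u + (dX*p2-dP*x2)•v‖^2
      = dP^2*‖(dX*q1-dQ*x1)•u + (dX*q2-dQ*x2)•v‖^2 := by
    rw [norm2_expand, norm2_expand]; exact h
  rw [n1, n2] at hsq
  have h2 : ‖P - X‖^2 * (dQ*dP*dX)^2 = ‖Q - X‖^2 * (dQ*dP*dX)^2 := by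
    linear_combination hsq
  have h3 : ‖P - X‖^2 = ‖Q - X‖^2 :=
    mul_right_cancel₀ (pow_ne_zero 2 (mul_pos (mul_pos hdQ hdP) hdX).ne') h2
  rw [dist_eq_norm, dist_eq_norm]
  calc ‖P - X‖ = Real.sqrt (‖P - X‖^2) := (Real.sqrt_sq (norm_nonneg _)).symm
    _ = Real.sqrt (‖Q - X‖^2) := by rw [h3]
    _ = ‖Q - X‖ := Real.sqrt_sq (norm_nonneg _)

private lemma range3 (P Q R : EuclideanSpace ℝ (Fin 2)) :
    Set.range ![P,Q,R] = {P, Q, R} := by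
  ext x
  simp [Fin.exists_fin_succ, Matrix.cons_val_zero, Matrix.cons_val_one]
  tauto

private lemma tri_pos {A B C : EuclideanSpace ℝ (Fin 2)} (h : AffineIndependent ℝ ![A,B,C]) :
    0 < dist C A + dist A B - dist B C := by
  have hle : dist B C ≤ dist B A + dist A C := dist_triangle B A C
  have hne : dist B A + dist A C ≠ dist B C := by
    intro heq
    have hw : Wbtw ℝ B A C := dist_add_dist_eq_iff.mp heq
    rw [affineIndependent_iff_not_collinear] at h
    apply h
    rw [range3]
    have := hw.collinear
    rwa [Set.insert_comm] at this
  have := lt_of_le_of_ne hle (Ne.symm hne)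
  rw [dist_comm C A, dist_comm A B]
  linarith

private lemma ai_rot {A B C : EuclideanSpace ℝ (Fin 2)} (h : AffineIndependent ℝ ![A,B,C]) :
    AffineIndependent ℝ ![B,C,A] := by
  rw [affineIndependent_iff_not_collinear] at h ⊢
  rw [range3] at h ⊢
  intro hc
  apply h
  have : ({A, B, C} : Set (EuclideanSpace ℝ (Fin 2))) = {B, C, A} := by
    ext x; simp; tauto
  rwa [this]

private lemma ai_ne12 {A B C : EuclideanSpace ℝ (Fin 2)} (h : AffineIndependent ℝ ![A,B,C]) :
    B ≠ C := by
  intro he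
  have : (1 : Fin 3) = 2 := h.injective (show ![A,B,C] 1 = ![A,B,C] 2 by simp [he])
  exact absurd this (by decide)

set_option maxHeartbeats 4000000 in
/-- The anti-Fuhrmann triangle is the reflection of the Fuhrmann triangle in the
midpoint of `H` and `I`. -/
theorem anti_fuhrmann_reflection
    (A B C I H HA HB HC Oa Ob Oc OA OB OC : EuclideanSpace ℝ (Fin 2))
    (hABC : AffineIndependent ℝ ![A, B, C])
    (a b c s : ℝ)
    (ha : a = dist B C) (hb : b = dist C A) (hc : c = dist A B)
    (hs : s = (a + b + c) / 2)
    (hI : I = (2 * s)⁻¹ • (a • A + b • B + c • C))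
    (hH : H = orthocenter3 A B C hABC)
    (hBIC : AffineIndependent ℝ ![B, I, C])
    (hCIA : AffineIndependent ℝ ![C, I, A])
    (hAIB : AffineIndependent ℝ ![A, I, B])
    (hHA : HA = orthocenter3 B I C hBIC)
    (hHB : HB = orthocenter3 C I A hCIA)
    (hHC : HC = orthocenter3 A I B hAIB)
    (ha' : AffineIndependent ℝ ![HA, B, C])
    (hb' : AffineIndependent ℝ ![HB, C, A])
    (hc' : AffineIndependent ℝ ![HC, A, B])
    (hOa : Oa = circumcenter3 HA B C ha')
    (hOb : Ob = circumcenter3 HB C A hb')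
    (hOc : Oc = circumcenter3 HC A B hc')
    (h1 : AffineIndependent ℝ ![A, HB, HC])
    (h2 : AffineIndependent ℝ ![B, HC, HA])
    (h3 : AffineIndependent ℝ ![C, HA, HB])
    (hOA : OA = circumcenter3 A HB HC h1)
    (hOB : OB = circumcenter3 B HC HA h2)
    (hOC : OC = circumcenter3 C HA HB h3) :
    OA = H + I - Oa ∧ OB = H + I - Ob ∧ OC = H + I - Oc := by
  subst hs
  obtain ⟨u, hu⟩ : ∃ u, B = A + u := ⟨B - A, by abel⟩
  obtain ⟨v, hv⟩ : ∃ v, C = A + v := ⟨C - A, by abel⟩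
  have repA : A = A + ((0:ℝ)/1)•u + ((0:ℝ)/1)•v := by norm_num
  have repB : B = A + ((1:ℝ)/1)•u + ((0:ℝ)/1)•v := by rw [hu]; norm_num
  have repC : C = A + ((0:ℝ)/1)•u + ((1:ℝ)/1)•v := by rw [hv]; norm_num
  have t1 : 0 < b + c - a := by rw [ha, hb, hc]; exact tri_pos hABC
  have t2 : 0 < c + a - b := by rw [ha, hb, hc]; exact tri_pos (ai_rot hABC)
  have t3 : 0 < a + b - c := by rw [ha, hb, hc]; exact tri_pos (ai_rot (ai_rot hABC))
  have t0 : 0 < a := by rw [ha]; exact dist_pos.mpr (ai_ne12 hABC)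
  have tb0 : 0 < b := by linarith
  have tc0 : 0 < c := by linarith
  have tT : 0 < a + b + c := by linarith
  have t2' : 0 < a + c - b := by linarith
  have n1 : a + b + c ≠ 0 := ne_of_gt (by linarith)
  have n2 : b + c - a ≠ 0 := ne_of_gt t1
  have n3 : a + c - b ≠ 0 := ne_of_gt (by linarith)
  have n4 : a + b - c ≠ 0 := ne_of_gt t3
  have hu' : u = B - A := by rw [hu]; abel
  have hv' : v = C - A := by rw [hv]; abel
  have guu : ⟪u,u⟫ = c^2 := by
    rw [hu', real_inner_self_eq_norm_sq, ← dist_eq_norm, dist_comm B A, ← hc]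
  have gvv : ⟪v,v⟫ = b^2 := by
    rw [hv', real_inner_self_eq_norm_sq, ← dist_eq_norm, ← hb]
  have guv : ⟪u,v⟫ = (b^2+c^2-a^2)/2 := by
    have e : B - C = u - v := by rw [hu', hv']; abel
    have ha2 : a^2 = ⟪u-v,u-v⟫ := by
      rw [← e, real_inner_self_eq_norm_sq, ← dist_eq_norm, ← ha]
    simp only [inner_sub_left, inner_sub_right, guu, gvv] at ha2
    linarith [real_inner_comm u v]
  have repI : I = A + (b/(a+b+c))•u + (c/(a+b+c))•v := by
    rw [hI, hu, hv]; match_scalars <;> (field_simp; try ring)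
  have dMa1 : dist B (A + ((b*(b+c))/((a+b+c)*(b+c-a)) : ℝ)•u + ((c*(b+c))/((a+b+c)*(b+c-a)) : ℝ)•v) = dist I (A + ((b*(b+c))/((a+b+c)*(b+c-a)) : ℝ)•u + ((c*(b+c))/((a+b+c)*(b+c-a)) : ℝ)•v) :=
    dist_eq_of_rep2 one_pos tT (mul_pos tT t1) repB repI rfl (by rw [guu, gvv, guv]; ring)
  have dMa2 : dist B (A + ((b*(b+c))/((a+b+c)*(b+c-a)) : ℝ)•u + ((c*(b+c))/((a+b+c)*(b+c-a)) : ℝ)•v) = dist C (A + ((b*(b+c))/((a+b+c)*(b+c-a)) : ℝ)•u + ((c*(b+c))/((a+b+c)*(b+c-a)) : ℝ)•v) :=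
    dist_eq_of_rep2 one_pos one_pos (mul_pos tT t1) repB repC rfl (by rw [guu, gvv, guv]; ring)
  have eqMa : (A + ((b*(b+c))/((a+b+c)*(b+c-a)) : ℝ)•u + ((c*(b+c))/((a+b+c)*(b+c-a)) : ℝ)•v) = circumcenter3 B I C hBIC :=
    circum_unique hBIC dMa1 dMa2
  have dMb1 : dist C (A + ((-(b^2))/((a+b+c)*(a+c-b)) : ℝ)•u + ((c*(a+c))/((a+b+c)*(a+c-b)) : ℝ)•v) = dist I (A + ((-(b^2))/((a+b+c)*(a+c-b)) : ℝ)•u + ((c*(a+c))/((a+b+c)*(a+c-b)) : ℝ)•v) :=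
    dist_eq_of_rep2 one_pos tT (mul_pos tT t2') repC repI rfl (by rw [guu, gvv, guv]; ring)
  have dMb2 : dist C (A + ((-(b^2))/((a+b+c)*(a+c-b)) : ℝ)•u + ((c*(a+c))/((a+b+c)*(a+c-b)) : ℝ)•v) = dist A (A + ((-(b^2))/((a+b+c)*(a+c-b)) : ℝ)•u + ((c*(a+c))/((a+b+c)*(a+c-b)) : ℝ)•v) :=
    dist_eq_of_rep2 one_pos one_pos (mul_pos tT t2') repC repA rfl (by rw [guu, gvv, guv]; ring)
  have eqMb : (A + ((-(b^2))/((a+b+c)*(a+c-b)) : ℝ)•u + ((c*(a+c))/((a+b+c)*(a+c-b)) : ℝ)•v) = circumcenter3 C I A hCIA :=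
    circum_unique hCIA dMb1 dMb2
  have dMc1 : dist A (A + ((b*(a+b))/((a+b+c)*(a+b-c)) : ℝ)•u + ((-(c^2))/((a+b+c)*(a+b-c)) : ℝ)•v) = dist I (A + ((b*(a+b))/((a+b+c)*(a+b-c)) : ℝ)•u + ((-(c^2))/((a+b+c)*(a+b-c)) : ℝ)•v) :=
    dist_eq_of_rep2 one_pos tT (mul_pos tT t3) repA repI rfl (by rw [guu, gvv, guv]; ring)
  have dMc2 : dist A (A + ((b*(a+b))/((a+b+c)*(a+b-c)) : ℝ)•u + ((-(c^2))/((a+b+c)*(a+b-c)) : ℝ)•v) = dist B (A + ((b*(a+b))/((a+b+c)*(a+b-c)) : ℝ)•u + ((-(c^2))/((a+b+c)*(a+b-c)) : ℝ)•v) :=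
    dist_eq_of_rep2 one_pos one_pos (mul_pos tT t3) repA repB rfl (by rw [guu, gvv, guv]; ring)
  have eqMc : (A + ((b*(a+b))/((a+b+c)*(a+b-c)) : ℝ)•u + ((-(c^2))/((a+b+c)*(a+b-c)) : ℝ)•v) = circumcenter3 A I B hAIB :=
    circum_unique hAIB dMc1 dMc2
  have dO1 : dist A (A + ((b^2*(c^2+a^2-b^2))/((a+b+c)*(b+c-a)*(a+c-b)*(a+b-c)) : ℝ)•u + ((c^2*(a^2+b^2-c^2))/((a+b+c)*(b+c-a)*(a+c-b)*(a+b-c)) : ℝ)•v) = dist B (A + ((b^2*(c^2+a^2-b^2))/((a+b+c)*(b+c-a)*(a+c-b)*(a+b-c)) : ℝ)•u + ((c^2*(a^2+b^2-c^2))/((a+b+c)*(b+c-a)*(a+c-b)*(a+b-c)) : ℝ)•v) :=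
    dist_eq_of_rep2 one_pos one_pos (mul_pos (mul_pos (mul_pos tT t1) t2') t3) repA repB rfl (by rw [guu, gvv, guv]; ring)
  have dO2 : dist A (A + ((b^2*(c^2+a^2-b^2))/((a+b+c)*(b+c-a)*(a+c-b)*(a+b-c)) : ℝ)•u + ((c^2*(a^2+b^2-c^2))/((a+b+c)*(b+c-a)*(a+c-b)*(a+b-c)) : ℝ)•v) = dist C (A + ((b^2*(c^2+a^2-b^2))/((a+b+c)*(b+c-a)*(a+c-b)*(a+b-c)) : ℝ)•u + ((c^2*(a^2+b^2-c^2))/((a+b+c)*(b+c-a)*(a+c-b)*(a+b-c)) : ℝ)•v) :=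
    dist_eq_of_rep2 one_pos one_pos (mul_pos (mul_pos (mul_pos tT t1) t2') t3) repA repC rfl (by rw [guu, gvv, guv]; ring)
  have eqO : (A + ((b^2*(c^2+a^2-b^2))/((a+b+c)*(b+c-a)*(a+c-b)*(a+b-c)) : ℝ)•u + ((c^2*(a^2+b^2-c^2))/((a+b+c)*(b+c-a)*(a+c-b)*(a+b-c)) : ℝ)•v) = circumcenter3 A B C hABC :=
    circum_unique hABC dO1 dO2
  have repH : H = (A + ((((a+b+c)*(b+c-a)*(a+c-b)*(a+b-c)) - 2*(b^2*(c^2+a^2-b^2)))/((a+b+c)*(b+c-a)*(a+c-b)*(a+b-c)) : ℝ)•u + ((((a+b+c)*(b+c-a)*(a+c-b)*(a+b-c)) - 2*(c^2*(a^2+b^2-c^2)))/((a+b+c)*(b+c-a)*(a+c-b)*(a+b-c)) : ℝ)•v) := by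
    rw [hH, euler3 hABC, ← eqO, hu, hv]
    match_scalars <;> field_simp [n1, n2, n3, n4] <;> ring
  have repHA : HA = (A + (((a+b+c)*(b+c-a) + b*(b+c-a) - 2*(b*(b+c)))/((a+b+c)*(b+c-a)) : ℝ)•u + (((a+b+c)*(b+c-a) + c*(b+c-a) - 2*(c*(b+c)))/((a+b+c)*(b+c-a)) : ℝ)•v) := by
    rw [hHA, euler3 hBIC, ← eqMa, hu, hv, repI]
    match_scalars <;> field_simp [n1, n2, n3, n4] <;> ring
  have repHB : HB = (A + ((b*(a+c-b) + 2*b^2)/((a+b+c)*(a+c-b)) : ℝ)•u + (((a+b+c)*(a+c-b) + c*(a+c-b) - 2*(c*(a+c)))/((a+b+c)*(a+c-b)) : ℝ)•v) := by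
    rw [hHB, euler3 hCIA, ← eqMb, hv, repI]
    match_scalars <;> field_simp [n1, n2, n3, n4] <;> ring
  have repHC : HC = (A + (((a+b+c)*(a+b-c) + b*(a+b-c) - 2*(b*(a+b)))/((a+b+c)*(a+b-c)) : ℝ)•u + ((c*(a+b-c) + 2*c^2)/((a+b+c)*(a+b-c)) : ℝ)•v) := by
    rw [hHC, euler3 hAIB, ← eqMc, hu, repI]
    match_scalars <;> field_simp [n1, n2, n3, n4] <;> ring
  have dOa1 : dist HA (A + (((a+b+c)*(b+c-a) - b*(b+c))/((a+b+c)*(b+c-a)) : ℝ)•u + (((a+b+c)*(b+c-a) - c*(b+c))/((a+b+c)*(b+c-a)) : ℝ)•v) = dist B (A + (((a+b+c)*(b+c-a) - b*(b+c))/((a+b+c)*(b+c-a)) : ℝ)•u + (((a+b+c)*(b+c-a) - c*(b+c))/((a+b+c)*(b+c-a)) : ℝ)•v) :=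
    dist_eq_of_rep2 (mul_pos tT t1) one_pos (mul_pos tT t1) repHA repB rfl (by rw [guu, gvv, guv]; ring)
  have dOa2 : dist HA (A + (((a+b+c)*(b+c-a) - b*(b+c))/((a+b+c)*(b+c-a)) : ℝ)•u + (((a+b+c)*(b+c-a) - c*(b+c))/((a+b+c)*(b+c-a)) : ℝ)•v) = dist C (A + (((a+b+c)*(b+c-a) - b*(b+c))/((a+b+c)*(b+c-a)) : ℝ)•u + (((a+b+c)*(b+c-a) - c*(b+c))/((a+b+c)*(b+c-a)) : ℝ)•v) :=
    dist_eq_of_rep2 (mul_pos tT t1) one_pos (mul_pos tT t1) repHA repC rfl (by rw [guu, gvv, guv]; ring)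
  have eqOa : (A + (((a+b+c)*(b+c-a) - b*(b+c))/((a+b+c)*(b+c-a)) : ℝ)•u + (((a+b+c)*(b+c-a) - c*(b+c))/((a+b+c)*(b+c-a)) : ℝ)•v) = circumcenter3 HA B C ha' :=
    circum_unique ha' dOa1 dOa2
  have dOb1 : dist HB (A + ((b^2)/((a+b+c)*(a+c-b)) : ℝ)•u + (((a+b+c)*(a+c-b) - c*(a+c))/((a+b+c)*(a+c-b)) : ℝ)•v) = dist C (A + ((b^2)/((a+b+c)*(a+c-b)) : ℝ)•u + (((a+b+c)*(a+c-b) - c*(a+c))/((a+b+c)*(a+c-b)) : ℝ)•v) :=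
    dist_eq_of_rep2 (mul_pos tT t2') one_pos (mul_pos tT t2') repHB repC rfl (by rw [guu, gvv, guv]; ring)
  have dOb2 : dist HB (A + ((b^2)/((a+b+c)*(a+c-b)) : ℝ)•u + (((a+b+c)*(a+c-b) - c*(a+c))/((a+b+c)*(a+c-b)) : ℝ)•v) = dist A (A + ((b^2)/((a+b+c)*(a+c-b)) : ℝ)•u + (((a+b+c)*(a+c-b) - c*(a+c))/((a+b+c)*(a+c-b)) : ℝ)•v) :=
    dist_eq_of_rep2 (mul_pos tT t2') one_pos (mul_pos tT t2') repHB repA rfl (by rw [guu, gvv, guv]; ring)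
  have eqOb : (A + ((b^2)/((a+b+c)*(a+c-b)) : ℝ)•u + (((a+b+c)*(a+c-b) - c*(a+c))/((a+b+c)*(a+c-b)) : ℝ)•v) = circumcenter3 HB C A hb' :=
    circum_unique hb' dOb1 dOb2
  have dOc1 : dist HC (A + (((a+b+c)*(a+b-c) - b*(a+b))/((a+b+c)*(a+b-c)) : ℝ)•u + ((c^2)/((a+b+c)*(a+b-c)) : ℝ)•v) = dist A (A + (((a+b+c)*(a+b-c) - b*(a+b))/((a+b+c)*(a+b-c)) : ℝ)•u + ((c^2)/((a+b+c)*(a+b-c)) : ℝ)•v) :=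
    dist_eq_of_rep2 (mul_pos tT t3) one_pos (mul_pos tT t3) repHC repA rfl (by rw [guu, gvv, guv]; ring)
  have dOc2 : dist HC (A + (((a+b+c)*(a+b-c) - b*(a+b))/((a+b+c)*(a+b-c)) : ℝ)•u + ((c^2)/((a+b+c)*(a+b-c)) : ℝ)•v) = dist B (A + (((a+b+c)*(a+b-c) - b*(a+b))/((a+b+c)*(a+b-c)) : ℝ)•u + ((c^2)/((a+b+c)*(a+b-c)) : ℝ)•v) :=
    dist_eq_of_rep2 (mul_pos tT t3) one_pos (mul_pos tT t3) repHC repB rfl (by rw [guu, gvv, guv]; ring)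
  have eqOc : (A + (((a+b+c)*(a+b-c) - b*(a+b))/((a+b+c)*(a+b-c)) : ℝ)•u + ((c^2)/((a+b+c)*(a+b-c)) : ℝ)•v) = circumcenter3 HC A B hc' :=
    circum_unique hc' dOc1 dOc2
  have repOa : Oa = (A + (((a+b+c)*(b+c-a) - b*(b+c))/((a+b+c)*(b+c-a)) : ℝ)•u + (((a+b+c)*(b+c-a) - c*(b+c))/((a+b+c)*(b+c-a)) : ℝ)•v) := hOa.trans eqOa.symm
  have repOb : Ob = (A + ((b^2)/((a+b+c)*(a+c-b)) : ℝ)•u + (((a+b+c)*(a+c-b) - c*(a+c))/((a+b+c)*(a+c-b)) : ℝ)•v) := hOb.trans eqOb.symm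
  have repOc : Oc = (A + (((a+b+c)*(a+b-c) - b*(a+b))/((a+b+c)*(a+b-c)) : ℝ)•u + ((c^2)/((a+b+c)*(a+b-c)) : ℝ)•v) := hOc.trans eqOc.symm
  have repXA : H + I - Oa = (A + (((((a+b+c)*(b+c-a)*(a+c-b)*(a+b-c)) - 2*(b^2*(c^2+a^2-b^2))) + b*(b+c-a)*(a+c-b)*(a+b-c) - ((a+b+c)*(b+c-a) - b*(b+c))*(a+c-b)*(a+b-c))/((a+b+c)*(b+c-a)*(a+c-b)*(a+b-c)) : ℝ)•u + (((((a+b+c)*(b+c-a)*(a+c-b)*(a+b-c)) - 2*(c^2*(a^2+b^2-c^2))) + c*(b+c-a)*(a+c-b)*(a+b-c) - ((a+b+c)*(b+c-a) - c*(b+c))*(a+c-b)*(a+b-c))/((a+b+c)*(b+c-a)*(a+c-b)*(a+b-c)) : ℝ)•v) := by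
    rw [repH, repI, repOa]
    match_scalars <;> field_simp [n1, n2, n3, n4] <;> ring
  have dXA1 : dist A (H + I - Oa) = dist HB (H + I - Oa) :=
    dist_eq_of_rep2 one_pos (mul_pos tT t2') (mul_pos (mul_pos (mul_pos tT t1) t2') t3) repA repHB repXA (by rw [guu, gvv, guv]; ring)
  have dXA2 : dist A (H + I - Oa) = dist HC (H + I - Oa) :=
    dist_eq_of_rep2 one_pos (mul_pos tT t3) (mul_pos (mul_pos (mul_pos tT t1) t2') t3) repA repHC repXA (by rw [guu, gvv, guv]; ring)
  have finXA := hOA.trans (circum_unique h1 dXA1 dXA2).symm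
  have repXB : H + I - Ob = (A + (((((a+b+c)*(b+c-a)*(a+c-b)*(a+b-c)) - 2*(b^2*(c^2+a^2-b^2))) + b*(b+c-a)*(a+c-b)*(a+b-c) - (b^2)*(b+c-a)*(a+b-c))/((a+b+c)*(b+c-a)*(a+c-b)*(a+b-c)) : ℝ)•u + (((((a+b+c)*(b+c-a)*(a+c-b)*(a+b-c)) - 2*(c^2*(a^2+b^2-c^2))) + c*(b+c-a)*(a+c-b)*(a+b-c) - ((a+b+c)*(a+c-b) - c*(a+c))*(b+c-a)*(a+b-c))/((a+b+c)*(b+c-a)*(a+c-b)*(a+b-c)) : ℝ)•v) := by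
    rw [repH, repI, repOb]
    match_scalars <;> field_simp [n1, n2, n3, n4] <;> ring
  have dXB1 : dist B (H + I - Ob) = dist HC (H + I - Ob) :=
    dist_eq_of_rep2 one_pos (mul_pos tT t3) (mul_pos (mul_pos (mul_pos tT t1) t2') t3) repB repHC repXB (by rw [guu, gvv, guv]; ring)
  have dXB2 : dist B (H + I - Ob) = dist HA (H + I - Ob) :=
    dist_eq_of_rep2 one_pos (mul_pos tT t1) (mul_pos (mul_pos (mul_pos tT t1) t2') t3) repB repHA repXB (by rw [guu, gvv, guv]; ring)
  have finXB := hOB.trans (circum_unique h2 dXB1 dXB2).symm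
  have repXC : H + I - Oc = (A + (((((a+b+c)*(b+c-a)*(a+c-b)*(a+b-c)) - 2*(b^2*(c^2+a^2-b^2))) + b*(b+c-a)*(a+c-b)*(a+b-c) - ((a+b+c)*(a+b-c) - b*(a+b))*(b+c-a)*(a+c-b))/((a+b+c)*(b+c-a)*(a+c-b)*(a+b-c)) : ℝ)•u + (((((a+b+c)*(b+c-a)*(a+c-b)*(a+b-c)) - 2*(c^2*(a^2+b^2-c^2))) + c*(b+c-a)*(a+c-b)*(a+b-c) - (c^2)*(b+c-a)*(a+c-b))/((a+b+c)*(b+c-a)*(a+c-b)*(a+b-c)) : ℝ)•v) := by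
    rw [repH, repI, repOc]
    match_scalars <;> field_simp [n1, n2, n3, n4] <;> ring
  have dXC1 : dist C (H + I - Oc) = dist HA (H + I - Oc) :=
    dist_eq_of_rep2 one_pos (mul_pos tT t1) (mul_pos (mul_pos (mul_pos tT t1) t2') t3) repC repHA repXC (by rw [guu, gvv, guv]; ring)
  have dXC2 : dist C (H + I - Oc) = dist HB (H + I - Oc) :=
    dist_eq_of_rep2 one_pos (mul_pos tT t2') (mul_pos (mul_pos (mul_pos tT t1) t2') t3) repC repHB repXC (by rw [guu, gvv, guv]; ring)
  have finXC := hOC.trans (circum_unique h3 dXC1 dXC2).symm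
  exact ⟨finXA, finXB, finXC⟩
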